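/- Let R be a Hermite ring such that the formal power series ring R[[X]] is a Bézout ring. Then R[[X]] is a Hermite ring. -/

import Mathlib

/-- An `m × n` matrix `A` over a ring `R` admits a *diagonal reduction* if there are
invertible square matrices `P` and `Q` with `P * A * Q` diagonal (all off-diagonal entries
vanish). -/
def AdmitsDiagonalReduction {R : Type*} [Ring R] {m n : ℕ}
    (A : Matrix (Fin m) (Fin n) R) : Prop :=
  ∃ (P : Matrix (Fin m) (Fin m) R) (Q : Matrix (Fin n) (Fin n) R),
    IsUnit P ∧ IsUnit Q ∧ ∀ (i : Fin m) (j : Fin n), (i : ℕ) ≠ (j : ℕ) → (P * A * Q) i j = 0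

/-- A ring is a (right) *Hermite ring* if every `1 × 2` matrix admits a diagonal
reduction. -/
def IsHermiteRing (R : Type*) [Ring R] : Prop :=
  ∀ A : Matrix (Fin 1) (Fin 2) R, AdmitsDiagonalReduction A

/-- A ring is (right) *Bézout* if every finitely generated right ideal is principal.
Right ideals of `R` are the submodules of `R` viewed as a right module over itself,
i.e. as a module over `Rᵐᵒᵖ`. -/
def IsRightBezoutRing (R : Type*) [Ring R] : Prop :=
  ∀ I : Submodule Rᵐᵒᵖ R, I.FG → ∃ a : R, I = Submodule.span Rᵐᵒᵖ {a}

private lemma key_combo {S : Type*} [Ring S]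
    (f₁ g₁ p q a b c d a' b' c' d' : S)
    (h1 : a * a' + b * c' = 1) (h2 : a * b' + b * d' = 0)
    (h3 : c * a' + d * c' = 0) (h4 : c * b' + d * d' = 1) :
    (f₁ * a + g₁ * c) * (a' * p + b' * q) + (f₁ * b + g₁ * d) * (c' * p + d' * q)
      = f₁ * p + g₁ * q := by
  have : (f₁ * a + g₁ * c) * (a' * p + b' * q) + (f₁ * b + g₁ * d) * (c' * p + d' * q)
      = f₁ * ((a * a' + b * c') * p) + f₁ * ((a * b' + b * d') * q)
        + g₁ * ((c * a' + d * c') * p) + g₁ * ((c * b' + d * d') * q) := by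
    noncomm_ring
  rw [this, h1, h2, h3, h4]
  noncomm_ring

set_option maxHeartbeats 2000000 in
/-- If `R` is a Hermite ring such that the formal power series ring `R[[X]]` is a Bézout
ring, then `R[[X]]` is a Hermite ring. -/
theorem powerSeries_hermite_of_bezout {R : Type*} [Ring R]
    (hR : IsHermiteRing R) (hB : IsRightBezoutRing (PowerSeries R)) :
    IsHermiteRing (PowerSeries R) := by
  classical
  intro A
  set f := A 0 0 with hfdef
  set g := A 0 1 with hgdef
  obtain ⟨h, hI⟩ := hB (Submodule.span (PowerSeries R)ᵐᵒᵖ {f, g})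
    (Submodule.fg_span (Set.toFinite _))
  -- divisibility data
  have hfmem : f ∈ Submodule.span (PowerSeries R)ᵐᵒᵖ {h} := by
    rw [← hI]; exact Submodule.subset_span (Set.mem_insert _ _)
  have hgmem : g ∈ Submodule.span (PowerSeries R)ᵐᵒᵖ {h} := by
    rw [← hI]; exact Submodule.subset_span (Set.mem_insert_of_mem _ rfl)
  have hhmem : h ∈ Submodule.span (PowerSeries R)ᵐᵒᵖ {f, g} := by
    rw [hI]; exact Submodule.mem_span_singleton_self h
  obtain ⟨c1, hc1⟩ := Submodule.mem_span_singleton.mp hfmem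
  obtain ⟨c2, hc2⟩ := Submodule.mem_span_singleton.mp hgmem
  obtain ⟨d1, d2, hd12⟩ := Submodule.mem_span_pair.mp hhmem
  set f₁ : (PowerSeries R) := c1.unop with hf₁def
  set g₁ : (PowerSeries R) := c2.unop with hg₁def
  set p : (PowerSeries R) := d1.unop with hpdef
  set q : (PowerSeries R) := d2.unop with hqdef
  have hf : f = h * f₁ := by
    rw [← hc1, MulOpposite.smul_eq_mul_unop]
  have hg : g = h * g₁ := by
    rw [← hc2, MulOpposite.smul_eq_mul_unop]
  have hh : f * p + g * q = h := by
    rw [← hd12, MulOpposite.smul_eq_mul_unop, MulOpposite.smul_eq_mul_unop]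
  have he : h * (f₁ * p + g₁ * q) = h := by
    calc h * (f₁ * p + g₁ * q) = (h * f₁) * p + (h * g₁) * q := by noncomm_ring
    _ = f * p + g * q := by rw [← hf, ← hg]
    _ = h := hh
  -- Hermite step on constant coefficients
  set a := PowerSeries.constantCoeff (R := R) f₁ with hadef
  set b := PowerSeries.constantCoeff (R := R) g₁ with hbdef
  obtain ⟨P0, Q0, hP0, hQ0, hred⟩ := hR !![a, b]
  have hkey : a * Q0 0 1 + b * Q0 1 1 = 0 := by
    have h01 := hred 0 1 (by norm_num)
    obtain ⟨PU, hPU⟩ := hP0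
    have hPinv : PU.inv 0 0 * P0 0 0 = 1 := by
      have := PU.inv_val
      rw [← Matrix.ext_iff] at this
      have h00 := this 0 0
      simpa [Matrix.mul_apply, Fin.sum_univ_one, hPU] using h00
    have hexp : (P0 * !![a, b] * Q0) 0 1
        = P0 0 0 * (a * Q0 0 1 + b * Q0 1 1) := by
      simp [Matrix.mul_apply, Fin.sum_univ_one, Fin.sum_univ_two, mul_add, mul_assoc]
    rw [hexp] at h01
    calc a * Q0 0 1 + b * Q0 1 1
        = (PU.inv 0 0 * P0 0 0) * (a * Q0 0 1 + b * Q0 1 1) := by rw [hPinv, one_mul]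
      _ = PU.inv 0 0 * (P0 0 0 * (a * Q0 0 1 + b * Q0 1 1)) := by rw [mul_assoc]
      _ = 0 := by rw [h01, mul_zero]
  -- map Q0 to power series
  set CC : R →+* (PowerSeries R) := PowerSeries.C (R := R) with hCCdef
  set QS : Matrix (Fin 2) (Fin 2) (PowerSeries R) := CC.mapMatrix Q0 with hQSdef
  have hQS : IsUnit QS := hQ0.map CC.mapMatrix
  obtain ⟨QU, hQU⟩ := hQ0
  set Q0' : Matrix (Fin 2) (Fin 2) R := QU.inv with hQ0'def
  set QS' : Matrix (Fin 2) (Fin 2) (PowerSeries R) := CC.mapMatrix Q0' with hQS'def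
  have hQQ' : QS * QS' = 1 := by
    rw [hQSdef, hQS'def, ← map_mul, hQ0'def, ← hQU, QU.val_inv, map_one]
  have hQQ'app : ∀ i j : Fin 2, QS i j = CC (Q0 i j) := by
    intro i j; simp [hQSdef]
  -- entry equations of QS * QS' = 1
  have hent : ∀ i j : Fin 2, QS i 0 * QS' 0 j + QS i 1 * QS' 1 j
      = (1 : Matrix (Fin 2) (Fin 2) (PowerSeries R)) i j := by
    intro i j
    rw [← Matrix.ext_iff] at hQQ'
    have := hQQ' i j
    simpa [Matrix.mul_apply, Fin.sum_univ_two] using this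
  have e1 : QS 0 0 * QS' 0 0 + QS 0 1 * QS' 1 0 = 1 := by simpa using hent 0 0
  have e2 : QS 0 0 * QS' 0 1 + QS 0 1 * QS' 1 1 = 0 := by simpa using hent 0 1
  have e3 : QS 1 0 * QS' 0 0 + QS 1 1 * QS' 1 0 = 0 := by simpa using hent 1 0
  have e4 : QS 1 0 * QS' 0 1 + QS 1 1 * QS' 1 1 = 1 := by simpa using hent 1 1
  -- transformed data
  set f₂ : (PowerSeries R) := f₁ * QS 0 0 + g₁ * QS 1 0 with hf₂def
  set g₂ : (PowerSeries R) := f₁ * QS 0 1 + g₁ * QS 1 1 with hg₂def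
  set p₂ : (PowerSeries R) := QS' 0 0 * p + QS' 0 1 * q with hp₂def
  set q₂ : (PowerSeries R) := QS' 1 0 * p + QS' 1 1 * q with hq₂def
  have he2 : f₂ * p₂ + g₂ * q₂ = f₁ * p + g₁ * q := by
    rw [hf₂def, hg₂def, hp₂def, hq₂def]
    exact key_combo f₁ g₁ p q _ _ _ _ _ _ _ _ e1 e2 e3 e4
  set w : (PowerSeries R) := 1 - (f₂ * p₂ + g₂ * q₂) with hwdef
  have hw : h * w = 0 := by
    rw [hwdef, he2, mul_sub, mul_one, he, sub_self]
  -- constant coefficients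
  have hccg₂ : PowerSeries.constantCoeff (R := R) g₂ = 0 := by
    rw [hg₂def]
    simp only [map_add, map_mul, hQQ'app]
    simpa [hCCdef, ← hadef, ← hbdef] using hkey
  set p₀ : R := PowerSeries.constantCoeff (R := R) p₂ with hp₀def
  set u : (PowerSeries R) := f₂ * CC p₀ + g₂ + w with hudef
  have hccu : PowerSeries.constantCoeff (R := R) u = 1 := by
    have c1 : PowerSeries.constantCoeff (R := R) (f₂ * CC p₀)
        = PowerSeries.constantCoeff (R := R) f₂ * p₀ := by
      rw [map_mul, hCCdef, PowerSeries.constantCoeff_C]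
    have c2 : PowerSeries.constantCoeff (R := R) w
        = 1 - PowerSeries.constantCoeff (R := R) f₂ * p₀ := by
      rw [hwdef, map_sub, map_one, map_add, map_mul, map_mul, hccg₂, ← hp₀def,
        zero_mul, add_zero]
    rw [hudef, map_add, map_add, c1, hccg₂, c2]
    noncomm_ring
  have hUu : IsUnit u := by
    rw [PowerSeries.isUnit_iff_constantCoeff, hccu]
    exact isUnit_one
  obtain ⟨U, hU⟩ := hUu
  set v : (PowerSeries R) := ↑U⁻¹ with hvdef
  have huv : u * v = 1 := by rw [hvdef, ← hU]; exact U.mul_inv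
  have hvu : v * u = 1 := by rw [hvdef, ← hU]; exact U.inv_mul
  have hhu : h * f₂ * CC p₀ + h * g₂ = h * u := by
    have : h * u = h * f₂ * CC p₀ + h * g₂ + h * w := by
      rw [hudef]; noncomm_ring
    rw [this, hw, add_zero]
  -- the explicit second factor
  set T : Matrix (Fin 2) (Fin 2) (PowerSeries R) :=
    !![CC p₀ * v, 1 - CC p₀ * v * f₂; v, -(v * f₂)] with hTdef
  set T' : Matrix (Fin 2) (Fin 2) (PowerSeries R) :=
    !![f₂, u - f₂ * CC p₀; 1, -(CC p₀)] with hT'def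
  have hTT' : T * T' = 1 := by
    have h00 : CC p₀ * v * f₂ + (1 - CC p₀ * v * f₂) * 1 = 1 := by noncomm_ring
    have h01 : CC p₀ * v * (u - f₂ * CC p₀) + (1 - CC p₀ * v * f₂) * -CC p₀ = 0 := by
      have e : CC p₀ * v * (u - f₂ * CC p₀) + (1 - CC p₀ * v * f₂) * -CC p₀
          = CC p₀ * (v * u) - CC p₀ := by noncomm_ring
      rw [e, hvu, mul_one, sub_self]
    have h10 : v * f₂ + -(v * f₂) * 1 = 0 := by noncomm_ring
    have h11 : v * (u - f₂ * CC p₀) + -(v * f₂) * -CC p₀ = 1 := by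
      have e : v * (u - f₂ * CC p₀) + -(v * f₂) * -CC p₀ = v * u := by noncomm_ring
      rw [e, hvu]
    rw [hTdef, hT'def, Matrix.mul_fin_two, h00, h01, h10, h11, Matrix.one_fin_two]
  have hT'T : T' * T = 1 := by
    have h00 : f₂ * (CC p₀ * v) + (u - f₂ * CC p₀) * v = 1 := by
      have e : f₂ * (CC p₀ * v) + (u - f₂ * CC p₀) * v = u * v := by noncomm_ring
      rw [e, huv]
    have h01 : f₂ * (1 - CC p₀ * v * f₂) + (u - f₂ * CC p₀) * -(v * f₂) = 0 := by
      have e : f₂ * (1 - CC p₀ * v * f₂) + (u - f₂ * CC p₀) * -(v * f₂)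
          = f₂ - u * v * f₂ := by noncomm_ring
      rw [e, huv, one_mul, sub_self]
    have h10 : 1 * (CC p₀ * v) + -CC p₀ * v = 0 := by noncomm_ring
    have h11 : 1 * (1 - CC p₀ * v * f₂) + -CC p₀ * -(v * f₂) = 1 := by noncomm_ring
    rw [hTdef, hT'def, Matrix.mul_fin_two, h00, h01, h10, h11, Matrix.one_fin_two]
  refine ⟨1, QS * T, isUnit_one, (hQS.mul ⟨⟨T, T', hTT', hT'T⟩, rfl⟩), ?_⟩
  intro i j hij
  have hi : i = 0 := Subsingleton.elim i 0
  have hj : j = 1 := by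
    have hjv : (j : ℕ) = 1 := by omega
    exact Fin.ext hjv
  subst hi; subst hj
  rw [Matrix.one_mul]
  have hAQS0 : (A * QS) 0 0 = h * f₂ := by
    rw [hf₂def]
    simp only [Matrix.mul_apply, Fin.sum_univ_two]
    rw [← hfdef, ← hgdef, hf, hg]
    noncomm_ring
  have hAQS1 : (A * QS) 0 1 = h * g₂ := by
    rw [hg₂def]
    simp only [Matrix.mul_apply, Fin.sum_univ_two]
    rw [← hfdef, ← hgdef, hf, hg]
    noncomm_ring
  have : (A * (QS * T)) 0 1 = (A * QS) 0 0 * T 0 1 + (A * QS) 0 1 * T 1 1 := by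
    rw [← Matrix.mul_assoc]
    simp [Matrix.mul_apply, Fin.sum_univ_two]
  rw [this, hAQS0, hAQS1, hTdef]
  show h * f₂ * (1 - CC p₀ * v * f₂) + h * g₂ * -(v * f₂) = 0
  calc h * f₂ * (1 - CC p₀ * v * f₂) + h * g₂ * -(v * f₂)
      = h * f₂ - (h * f₂ * CC p₀ + h * g₂) * (v * f₂) := by noncomm_ring
    _ = h * f₂ - h * u * (v * f₂) := by rw [hhu]
    _ = h * f₂ - h * ((u * v) * f₂) := by noncomm_ring
    _ = 0 := by rw [huv, one_mul, sub_self]
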